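/- Let T > 0, ε ∈ (0,1) and C ≥ 0. Let y : [0,T] → ℝ be continuous and nonnegative, differentiable on (0,T], and let g : [0,T] → ℝ be continuous and nonnegative. Assume y'(t) ≤ C·t^(ε−1)·y(t) + g(t) for all t ∈ (0,T]. Then for all t ∈ [0,T]: y(t) ≤ exp(C·t^ε/ε)·( y(0) + ∫_0^t g(τ) dτ ). -/

import Mathlib

open Real Set MeasureTheory intervalIntegral

theorem singular_gronwall (T ε C : ℝ) (hT : 0 < T) (hε : ε ∈ Set.Ioo (0:ℝ) 1)
    (hC : 0 ≤ C) (y y' g : ℝ → ℝ)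
    (hy_cont : ContinuousOn y (Set.Icc 0 T))
    (hy_nonneg : ∀ t ∈ Set.Icc (0:ℝ) T, 0 ≤ y t)
    (hy_deriv : ∀ t ∈ Set.Ioc (0:ℝ) T, HasDerivAt y (y' t) t)
    (hg_cont : ContinuousOn g (Set.Icc 0 T))
    (hg_nonneg : ∀ t ∈ Set.Icc (0:ℝ) T, 0 ≤ g t)
    (hineq : ∀ t ∈ Set.Ioc (0:ℝ) T, y' t ≤ C * t ^ (ε - 1) * y t + g t) :
    ∀ t ∈ Set.Icc (0:ℝ) T,
      y t ≤ Real.exp (C * t ^ ε / ε) * (y 0 + ∫ τ in (0:ℝ)..t, g τ) := by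
  obtain ⟨hε0, hε1⟩ := hε
  have hεne : ε ≠ 0 := ne_of_gt hε0
  set E : ℝ → ℝ := fun s => Real.exp (-(C * s ^ ε / ε)) with hE
  set G : ℝ → ℝ := fun s => ∫ τ in (0:ℝ)..s, g τ with hG
  set F : ℝ → ℝ := fun s => E s * y s - G s with hF
  -- integrability of g
  have hg_int : IntegrableOn g (Set.uIcc 0 T) volume := by
    rw [Set.uIcc_of_le hT.le]
    exact (hg_cont.mono (by simp)).integrableOn_compact isCompact_Icc
  -- continuity of F on Icc 0 T
  have hE_cont : Continuous E := by
    apply Real.continuous_exp.comp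
    have h : Continuous fun s : ℝ => s ^ ε := continuous_id.rpow_const fun x => Or.inr hε0.le
    exact ((continuous_const.mul h).div_const ε).neg
  have hG_cont : ContinuousOn G (Set.Icc 0 T) := by
    have := intervalIntegral.continuousOn_primitive_interval (a := (0:ℝ)) (b := T)
      (f := g) (μ := volume) hg_int
    rwa [Set.uIcc_of_le hT.le] at this
  have hF_cont : ContinuousOn F (Set.Icc 0 T) :=
    ((hE_cont.continuousOn).mul hy_cont).sub hG_cont
  -- derivative facts on Ioo 0 T
  have hderiv : ∀ t ∈ Set.Ioo (0:ℝ) T, HasDerivAt F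
      (E t * (-(C * t ^ (ε - 1))) * y t + E t * y' t - g t) t := by
    intro t ht
    have ht0 : (0:ℝ) < t := ht.1
    have h1 : HasDerivAt (fun s : ℝ => s ^ ε) (ε * t ^ (ε - 1)) t :=
      Real.hasDerivAt_rpow_const (Or.inl ht0.ne')
    have h2 : HasDerivAt (fun s : ℝ => -(C * s ^ ε / ε)) (-(C * t ^ (ε - 1))) t := by
      have := ((h1.const_mul C).div_const ε).neg
      refine this.congr_deriv ?_
      rw [mul_left_comm, mul_div_cancel_left₀ _ hεne]
    have h3 : HasDerivAt E (E t * (-(C * t ^ (ε - 1)))) t := by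
      have := h2.exp
      simpa [hE] using this
    have h4 : HasDerivAt y (y' t) t := hy_deriv t ⟨ht0, ht.2.le⟩
    have h5 : HasDerivAt (fun s => E s * y s)
        (E t * (-(C * t ^ (ε - 1))) * y t + E t * y' t) t := h3.mul h4
    have hmem : Set.Icc (0:ℝ) T ∈ nhds t :=
      Icc_mem_nhds ht0 ht.2
    have hct : ContinuousAt g t := hg_cont.continuousAt hmem
    have h6 : HasDerivAt G (g t) t := by
      apply intervalIntegral.integral_hasDerivAt_right
      · exact (hg_int.mono_set (by
          rw [Set.uIcc_of_le hT.le, Set.uIcc_of_le ht0.le]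
          exact Set.Icc_subset_Icc le_rfl ht.2.le)).intervalIntegrable
      · exact ⟨Set.Icc (0:ℝ) T, hmem, hg_cont.aestronglyMeasurable measurableSet_Icc⟩
      · exact hct
    exact h5.sub h6
  -- F is antitone
  have hanti : AntitoneOn F (Set.Icc 0 T) := by
    apply antitoneOn_of_deriv_nonpos (convex_Icc 0 T) hF_cont
    · intro t ht
      rw [interior_Icc] at ht
      exact ((hderiv t ht).differentiableAt).differentiableWithinAt
    · intro t ht
      rw [interior_Icc] at ht
      rw [(hderiv t ht).deriv]
      have htIcc : t ∈ Set.Icc (0:ℝ) T := ⟨ht.1.le, ht.2.le⟩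
      have hEpos : 0 < E t := Real.exp_pos _
      have hEle : E t ≤ 1 := by
        apply Real.exp_le_one_iff.mpr
        have : 0 ≤ C * t ^ ε / ε :=
          div_nonneg (mul_nonneg hC (Real.rpow_nonneg ht.1.le _)) hε0.le
        linarith
      have hyt : 0 ≤ y t := hy_nonneg t htIcc
      have hgt : 0 ≤ g t := hg_nonneg t htIcc
      have hin := hineq t ⟨ht.1, ht.2.le⟩
      have htp : 0 ≤ t ^ (ε - 1) := Real.rpow_nonneg ht.1.le _
      nlinarith [mul_le_mul_of_nonneg_left hin hEpos.le,
        mul_nonneg (mul_nonneg hC htp) hyt]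
  -- conclude
  intro t ht
  have hF0 : F t ≤ F 0 := hanti (Set.left_mem_Icc.mpr hT.le) ht ht.1
  have hG0 : G 0 = 0 := by simp [hG]
  have hE0 : E 0 = 1 := by
    simp [hE, Real.zero_rpow hεne]
  have key : E t * y t ≤ y 0 + G t := by
    have := hF0
    simp only [hF, hG0, hE0, one_mul] at this
    linarith
  have hexp : 0 < Real.exp (C * t ^ ε / ε) := Real.exp_pos _
  have hEt : E t = (Real.exp (C * t ^ ε / ε))⁻¹ := by
    rw [hE]; rw [← Real.exp_neg]
  calc y t = Real.exp (C * t ^ ε / ε) * (E t * y t) := by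
        rw [hEt]; field_simp
    _ ≤ Real.exp (C * t ^ ε / ε) * (y 0 + G t) :=
        mul_le_mul_of_nonneg_left key hexp.le
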